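/- Let B : ℝ^(n+1) × ℝ^(n+1) → ℝᵐ be a symmetric nonsingular bilinear map. Then the embedding Sⁿ → ℝ^(n+1) × ℝᵐ given by x ↦ (x, B(x,x)) is totally skew: for distinct x ≠ y in Sⁿ, the tangent spaces (as affine subspaces) at the corresponding points contain no pair of parallel or intersecting lines. -/

import Mathlib

/-- Let `B : ℝ^(n+1) × ℝ^(n+1) → ℝᵐ` be a symmetric nonsingular bilinear map.  Then
`x ↦ (x, B(x,x))` is a totally skew embedding of `Sⁿ`: for distinct `x ≠ y` on the unit
sphere, the direction spaces `{(v, 2B(x,v)) : ⟨v,x⟩ = 0}` and `{(w, 2B(y,w)) : ⟨w,y⟩ = 0}`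
of the affine tangent spaces intersect only in `0`, and the affine tangent spaces are
disjoint. -/
theorem bilinear_sphere_totally_skew (n m : ℕ)
    (B : EuclideanSpace ℝ (Fin (n + 1)) →ₗ[ℝ] EuclideanSpace ℝ (Fin (n + 1)) →ₗ[ℝ]
      EuclideanSpace ℝ (Fin m))
    (hsymm : ∀ x y, B x y = B y x)
    (hns : ∀ x y, B x y = 0 → x = 0 ∨ y = 0)
    (x y : EuclideanSpace ℝ (Fin (n + 1))) (hx : ‖x‖ = 1) (hy : ‖y‖ = 1) (hxy : x ≠ y) :
    (∀ u : EuclideanSpace ℝ (Fin (n + 1)) × EuclideanSpace ℝ (Fin m),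
        (∃ v, (inner ℝ v x : ℝ) = 0 ∧ u = (v, (2 : ℝ) • B x v)) →
        (∃ w, (inner ℝ w y : ℝ) = 0 ∧ u = (w, (2 : ℝ) • B y w)) → u = 0) ∧
    (∀ (v w : EuclideanSpace ℝ (Fin (n + 1))),
        (inner ℝ v x : ℝ) = 0 → (inner ℝ w y : ℝ) = 0 →
        ((x, B x x) : EuclideanSpace ℝ (Fin (n + 1)) × EuclideanSpace ℝ (Fin m)) +
            (v, (2 : ℝ) • B x v) ≠ (y, B y y) + (w, (2 : ℝ) • B y w)) := by
  constructor
  · rintro u ⟨v, hv, rfl⟩ ⟨w, hw, huw⟩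
    obtain ⟨h1, h2⟩ := Prod.mk.injEq .. ▸ huw
    subst h1
    have hB : B (x - y) v = 0 := by
      have : B x v - B y v = 0 := by
        have := smul_right_injective (EuclideanSpace ℝ (Fin m)) (two_ne_zero (α := ℝ)) h2
        rw [this]; abel
      simpa [map_sub] using this
    rcases hns _ _ hB with h | h
    · exact absurd (sub_eq_zero.mp h) hxy
    · simp [h]
  · intro v w hv hw heq
    have h1 : x + v = y + w := (Prod.ext_iff.mp heq).1
    have h2 : B x x + (2 : ℝ) • B x v = B y y + (2 : ℝ) • B y w := (Prod.ext_iff.mp heq).2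
    have hw' : w = x + v - y := by rw [h1]; abel
    subst hw'
    have h3 : B (x - y) (x - y + (2 : ℝ) • v) = 0 := by
      have hs := hsymm x y
      simp only [map_sub, map_add, map_smul, LinearMap.sub_apply, LinearMap.add_apply,
        LinearMap.smul_apply, smul_sub, smul_add] at h2 ⊢
      linear_combination (norm := module) h2 - hs
    rcases hns _ _ h3 with h | h
    · exact hxy (sub_eq_zero.mp h)
    · -- x - y + 2v = 0, so 2v = y - x
      have h2v : (2 : ℝ) • v = y - x := by
        have : x - y + (2 : ℝ) • v = 0 := h
        linear_combination (norm := module) this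
      have hyx : (inner ℝ y x : ℝ) = 1 := by
        have : (inner ℝ ((2 : ℝ) • v) x : ℝ) = 0 := by
          rw [real_inner_smul_left, hv]; ring
        rw [h2v, inner_sub_left, real_inner_self_eq_norm_sq, hx] at this
        linarith
      have hxy1 : (inner ℝ x y : ℝ) = 1 := by
        -- w = x + v - y, 2w = x - y
        have h2w : (2 : ℝ) • (x + v - y) = x - y := by
          linear_combination (norm := module) h2v
        have : (inner ℝ ((2 : ℝ) • (x + v - y)) y : ℝ) = 0 := by
          rw [real_inner_smul_left, hw]; ring
        rw [h2w, inner_sub_left, real_inner_self_eq_norm_sq, hy] at this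
        linarith
      have : ‖x - y‖ ^ 2 = 0 := by
        rw [← real_inner_self_eq_norm_sq, inner_sub_sub_self,
          real_inner_self_eq_norm_sq, real_inner_self_eq_norm_sq, hx, hy, hxy1, real_inner_comm,
          hxy1]
        ring
      exact hxy (sub_eq_zero.mp (norm_eq_zero.mp ((pow_eq_zero_iff two_ne_zero).mp this)))
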